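/- For the 2D energy-based SBP-SAT discretization with Dirichlet boundary conditions, the discrete energy E_H = uᵀ𝐀u + vᵀ𝐇v satisfies dE_H/dt = 2θ vᵀ(e_W H_y e_Wᵀ + e_E H_y e_Eᵀ + e_S H_x e_Sᵀ + e_N H_x e_Nᵀ)v ≤ 0 for θ ≤ 0, assuming homogeneous boundary data and zero forcing. -/

import Mathlib

open Matrix

lemma dot_symm' {ι : Type*} [Fintype ι] (M : Matrix ι ι ℝ) (h : Mᵀ = M) (u v : ι → ℝ) :
    u ⬝ᵥ (M *ᵥ v) = v ⬝ᵥ (M *ᵥ u) := by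
  rw [dotProduct_mulVec]; nth_rewrite 1 [← h]; rw [vecMul_transpose, dotProduct_comm]

lemma triple' {ι κ : Type*} [Fintype ι] [Fintype κ] (M : Matrix κ κ ℝ) (h : Mᵀ = M)
    (P Q : Matrix ι κ ℝ) (x y : ι → ℝ) :
    x ⬝ᵥ (P *ᵥ (M *ᵥ (Qᵀ *ᵥ y))) = y ⬝ᵥ (Q *ᵥ (M *ᵥ (Pᵀ *ᵥ x))) := by
  rw [dotProduct_mulVec, ← mulVec_transpose, dotProduct_mulVec y, ← mulVec_transpose Q]
  exact dot_symm' M h _ _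

lemma posit' {ι κ : Type*} [Fintype ι] [Fintype κ] (M : Matrix κ κ ℝ) (hM : M.PosSemidef)
    (P : Matrix ι κ ℝ) (x : ι → ℝ) :
    0 ≤ x ⬝ᵥ (P *ᵥ (M *ᵥ (Pᵀ *ᵥ x))) := by
  rw [dotProduct_mulVec, ← mulVec_transpose]
  simpa using hM.dotProduct_mulVec_nonneg (Pᵀ *ᵥ x)

lemma quad_deriv' {ι : Type*} [Fintype ι] (M : Matrix ι ι ℝ) (u v : ℝ → ι → ℝ)
    (U V : ι → ℝ) (t : ℝ) (hu : HasDerivAt u U t) (hv : HasDerivAt v V t) :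
    HasDerivAt (fun s => u s ⬝ᵥ (M *ᵥ v s))
      (U ⬝ᵥ (M *ᵥ v t) + u t ⬝ᵥ (M *ᵥ V)) t := by
  have hu' : ∀ i, HasDerivAt (fun s => u s i) (U i) t := fun i => (hasDerivAt_pi.mp hu) i
  have hv' : ∀ i, HasDerivAt (fun s => v s i) (V i) t := fun i => (hasDerivAt_pi.mp hv) i
  have h2 : ∀ i : ι, HasDerivAt (fun s => u s i * ∑ j, M i j * v s j)
      (U i * (∑ j, M i j * v t j) + u t i * (∑ j, M i j * V j)) t :=
    fun i => (hu' i).mul (HasDerivAt.fun_sum (fun j _ => (hv' j).const_mul (M i j)))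
  have h3 := HasDerivAt.fun_sum (fun i (_ : i ∈ Finset.univ) => h2 i)
  simp only [dotProduct, mulVec, Finset.sum_add_distrib] at *
  exact h3

theorem stmt13 {ι ιx ιy : Type*} [Fintype ι] [Fintype ιx] [Fintype ιy]
    [DecidableEq ι]
    (AA HH DD : Matrix ι ι ℝ) (hA : AA.PosSemidef) (hH : HH.PosDef)
    (Hx : Matrix ιx ιx ℝ) (Hy : Matrix ιy ιy ℝ)
    (hHx : Hx.PosDef) (hHy : Hy.PosDef)
    (eW eE dW dE : Matrix ι ιy ℝ) (eS eN dS dN : Matrix ι ιx ℝ)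
    (θ : ℝ) (hθ : θ ≤ 0)
    (hD : HH * DD = -AA - eW * Hy * dWᵀ + eE * Hy * dEᵀ
        - eS * Hx * dSᵀ + eN * Hx * dNᵀ)
    (u v u' v' : ℝ → ι → ℝ)
    (hu : ∀ t, HasDerivAt u (u' t) t) (hv : ∀ t, HasDerivAt v (v' t) t)
    (heq1 : ∀ t, AA *ᵥ (u' t - v t) =
        dW *ᵥ (Hy *ᵥ (eWᵀ *ᵥ v t)) - dE *ᵥ (Hy *ᵥ (eEᵀ *ᵥ v t))
          + dS *ᵥ (Hx *ᵥ (eSᵀ *ᵥ v t)) - dN *ᵥ (Hx *ᵥ (eNᵀ *ᵥ v t)))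
    (heq2 : ∀ t, v' t = DD *ᵥ u t
        + θ • (HH⁻¹ *ᵥ (eW *ᵥ (Hy *ᵥ (eWᵀ *ᵥ v t)) + eE *ᵥ (Hy *ᵥ (eEᵀ *ᵥ v t))
            + eS *ᵥ (Hx *ᵥ (eSᵀ *ᵥ v t)) + eN *ᵥ (Hx *ᵥ (eNᵀ *ᵥ v t)))))
    (E : ℝ → ℝ)
    (hE : ∀ t, E t = u t ⬝ᵥ (AA *ᵥ u t) + v t ⬝ᵥ (HH *ᵥ v t)) :
    ∀ t, HasDerivAt E
        (2 * θ * (v t ⬝ᵥ (eW *ᵥ (Hy *ᵥ (eWᵀ *ᵥ v t)))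
          + v t ⬝ᵥ (eE *ᵥ (Hy *ᵥ (eEᵀ *ᵥ v t)))
          + v t ⬝ᵥ (eS *ᵥ (Hx *ᵥ (eSᵀ *ᵥ v t)))
          + v t ⬝ᵥ (eN *ᵥ (Hx *ᵥ (eNᵀ *ᵥ v t))))) t ∧
      2 * θ * (v t ⬝ᵥ (eW *ᵥ (Hy *ᵥ (eWᵀ *ᵥ v t)))
          + v t ⬝ᵥ (eE *ᵥ (Hy *ᵥ (eEᵀ *ᵥ v t)))
          + v t ⬝ᵥ (eS *ᵥ (Hx *ᵥ (eSᵀ *ᵥ v t)))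
          + v t ⬝ᵥ (eN *ᵥ (Hx *ᵥ (eNᵀ *ᵥ v t)))) ≤ 0 := by
  have hAs : AAᵀ = AA := by have := hA.isHermitian; simpa [Matrix.IsHermitian] using this
  have hHs : HHᵀ = HH := by have := hH.isHermitian; simpa [Matrix.IsHermitian] using this
  have hHxs : Hxᵀ = Hx := by have := hHx.isHermitian; simpa [Matrix.IsHermitian] using this
  have hHys : Hyᵀ = Hy := by have := hHy.isHermitian; simpa [Matrix.IsHermitian] using this
  intro t
  -- the raw derivative
  have hEfun : E = fun s => u s ⬝ᵥ (AA *ᵥ u s) + v s ⬝ᵥ (HH *ᵥ v s) := funext hE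
  have hderiv : HasDerivAt E
      ((u' t ⬝ᵥ (AA *ᵥ u t) + u t ⬝ᵥ (AA *ᵥ u' t))
        + (v' t ⬝ᵥ (HH *ᵥ v t) + v t ⬝ᵥ (HH *ᵥ v' t))) t := by
    rw [hEfun]
    exact (quad_deriv' AA u u (u' t) (u' t) t (hu t) (hu t)).add
      (quad_deriv' HH v v (v' t) (v' t) t (hv t) (hv t))
  -- rewrite A u'
  have hAu' : AA *ᵥ u' t =
      (dW *ᵥ (Hy *ᵥ (eWᵀ *ᵥ v t)) - dE *ᵥ (Hy *ᵥ (eEᵀ *ᵥ v t))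
        + dS *ᵥ (Hx *ᵥ (eSᵀ *ᵥ v t)) - dN *ᵥ (Hx *ᵥ (eNᵀ *ᵥ v t))) + AA *ᵥ v t := by
    have h := heq1 t
    rw [mulVec_sub, sub_eq_iff_eq_add] at h
    exact h
  -- rewrite H v'
  have hdet : IsUnit HH.det := isUnit_iff_ne_zero.mpr hH.det_pos.ne'
  have hinv : HH * HH⁻¹ = 1 := mul_nonsing_inv HH hdet
  have hHv' : HH *ᵥ v' t =
      (-(AA *ᵥ u t) - eW *ᵥ (Hy *ᵥ (dWᵀ *ᵥ u t)) + eE *ᵥ (Hy *ᵥ (dEᵀ *ᵥ u t))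
        - eS *ᵥ (Hx *ᵥ (dSᵀ *ᵥ u t)) + eN *ᵥ (Hx *ᵥ (dNᵀ *ᵥ u t)))
      + θ • (eW *ᵥ (Hy *ᵥ (eWᵀ *ᵥ v t)) + eE *ᵥ (Hy *ᵥ (eEᵀ *ᵥ v t))
          + eS *ᵥ (Hx *ᵥ (eSᵀ *ᵥ v t)) + eN *ᵥ (Hx *ᵥ (eNᵀ *ᵥ v t))) := by
    rw [heq2 t, mulVec_add, mulVec_smul, mulVec_mulVec, mulVec_mulVec, hinv, one_mulVec, hD]
    simp only [Matrix.add_mulVec, Matrix.sub_mulVec, Matrix.neg_mulVec, ← mulVec_mulVec]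
  have key :
      (u' t ⬝ᵥ (AA *ᵥ u t) + u t ⬝ᵥ (AA *ᵥ u' t))
        + (v' t ⬝ᵥ (HH *ᵥ v t) + v t ⬝ᵥ (HH *ᵥ v' t))
      = 2 * θ * (v t ⬝ᵥ (eW *ᵥ (Hy *ᵥ (eWᵀ *ᵥ v t)))
          + v t ⬝ᵥ (eE *ᵥ (Hy *ᵥ (eEᵀ *ᵥ v t)))
          + v t ⬝ᵥ (eS *ᵥ (Hx *ᵥ (eSᵀ *ᵥ v t)))
          + v t ⬝ᵥ (eN *ᵥ (Hx *ᵥ (eNᵀ *ᵥ v t)))) := by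
    rw [dot_symm' AA hAs (u' t) (u t), dot_symm' HH hHs (v' t) (v t), hAu', hHv']
    simp only [dotProduct_add, dotProduct_sub, dotProduct_neg, dotProduct_smul, smul_eq_mul]
    rw [triple' Hy hHys dW eW (u t) (v t), triple' Hy hHys dE eE (u t) (v t),
      triple' Hx hHxs dS eS (u t) (v t), triple' Hx hHxs dN eN (u t) (v t),
      dot_symm' AA hAs (u t) (v t)]
    ring
  constructor
  · rw [key] at hderiv; exact hderiv
  · have h1 := posit' Hy hHy.posSemidef eW (v t)
    have h2 := posit' Hy hHy.posSemidef eE (v t)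
    have h3 := posit' Hx hHx.posSemidef eS (v t)
    have h4 := posit' Hx hHx.posSemidef eN (v t)
    nlinarith [mul_nonneg (neg_nonneg.2 hθ) (by linarith : (0:ℝ) ≤
      v t ⬝ᵥ (eW *ᵥ (Hy *ᵥ (eWᵀ *ᵥ v t))) + v t ⬝ᵥ (eE *ᵥ (Hy *ᵥ (eEᵀ *ᵥ v t)))
        + v t ⬝ᵥ (eS *ᵥ (Hx *ᵥ (eSᵀ *ᵥ v t))) + v t ⬝ᵥ (eN *ᵥ (Hx *ᵥ (eNᵀ *ᵥ v t))))]
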